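/- For an integer m ≥ 4 let C_m be the m×m integer matrix with rows and columns indexed by 1, …, m defined as follows: for 1 ≤ i ≤ m−2, row i has entries 1 at columns i, i+1, i+2 and 0 elsewhere; row m−1 has entries 1 at columns 2, m−1, m and 0 elsewhere; row m has entry −1 at column 1, entry 1 at column m, and 0 elsewhere. Then det C_m = 0 if m mod 3 = 1, and det C_m = 3 if m mod 3 ∈ {0, 2}. -/

import Mathlib

set_option maxRecDepth 8000

/-- The self-replicating `m×m` integer matrix (rows and columns indexed here by
`0, …, m−1`, corresponding to `1, …, m` in the paper):
for `1 ≤ i ≤ m−2` (1-based), row `i` has `1` at columns `i, i+1, i+2` (1-based);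
row `m−1` has `1` at columns `2, m−1, m` (1-based); row `m` has `−1` at column `1`
and `1` at column `m` (1-based). -/
def Cmat (m : ℕ) : Matrix (Fin m) (Fin m) ℤ :=
  Matrix.of fun i j =>
    if (i : ℕ) + 2 < m then
      if (j : ℕ) = (i : ℕ) ∨ (j : ℕ) = (i : ℕ) + 1 ∨ (j : ℕ) = (i : ℕ) + 2 then 1 else 0
    else if (i : ℕ) = m - 2 then
      if (j : ℕ) = 1 ∨ (j : ℕ) = m - 2 ∨ (j : ℕ) = m - 1 then 1 else 0
    else
      if (j : ℕ) = 0 then -1 else if (j : ℕ) = m - 1 then 1 else 0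

private def CM1 (m : ℕ) : Matrix (Fin (m + 3)) (Fin (m + 3)) ℤ :=
  (Cmat (m+3)).updateRow ⟨m+1, by omega⟩
    ((Cmat (m+3)) ⟨m+1, by omega⟩ + (1:ℤ) • (Cmat (m+3)) ⟨2, by omega⟩)

private def CM2 (m : ℕ) : Matrix (Fin (m + 3)) (Fin (m + 3)) ℤ :=
  (CM1 m).updateRow ⟨m+1, by omega⟩
    ((CM1 m) ⟨m+1, by omega⟩ + (-1:ℤ) • (CM1 m) ⟨1, by omega⟩)

private def CM3 (m : ℕ) : Matrix (Fin (m + 3)) (Fin (m + 3)) ℤ :=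
  (CM2 m).updateRow ⟨m+2, by omega⟩
    ((CM2 m) ⟨m+2, by omega⟩ + (1:ℤ) • (CM2 m) ⟨0, by omega⟩)

private def CM4 (m : ℕ) : Matrix (Fin (m + 3)) (Fin (m + 3)) ℤ :=
  (CM3 m).updateRow ⟨m+2, by omega⟩
    ((CM3 m) ⟨m+2, by omega⟩ + (-1:ℤ) • (CM3 m) ⟨1, by omega⟩)

private lemma detCM4 (m : ℕ) (hm : 4 ≤ m) : (CM4 m).det = (Cmat (m+3)).det := by
  have h1 : (⟨m+2, by omega⟩ : Fin (m+3)) ≠ ⟨1, by omega⟩ := by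
    simp only [ne_eq, Fin.mk.injEq]; omega
  have h2 : (⟨m+2, by omega⟩ : Fin (m+3)) ≠ ⟨0, by omega⟩ := by
    simp only [ne_eq, Fin.mk.injEq]; omega
  have h3 : (⟨m+1, by omega⟩ : Fin (m+3)) ≠ ⟨1, by omega⟩ := by
    simp only [ne_eq, Fin.mk.injEq]; omega
  have h4 : (⟨m+1, by omega⟩ : Fin (m+3)) ≠ ⟨2, by omega⟩ := by
    simp only [ne_eq, Fin.mk.injEq]; omega
  rw [CM4, Matrix.det_updateRow_add_smul_self _ h1]
  rw [CM3, Matrix.det_updateRow_add_smul_self _ h2]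
  rw [CM2, Matrix.det_updateRow_add_smul_self _ h3]
  rw [CM1, Matrix.det_updateRow_add_smul_self _ h4]

/-- The explicit form of the row-reduced matrix. -/
private def Rmat (m : ℕ) : Matrix (Fin (m + 3)) (Fin (m + 3)) ℤ :=
  Matrix.of fun i j =>
    if (i : ℕ) + 2 < m + 3 then
      if (j : ℕ) = (i : ℕ) ∨ (j : ℕ) = (i : ℕ) + 1 ∨ (j : ℕ) = (i : ℕ) + 2 then 1 else 0
    else if (i : ℕ) = m + 1 then
      if (j : ℕ) = 4 ∨ (j : ℕ) = m + 1 ∨ (j : ℕ) = m + 2 then 1 else 0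
    else
      if (j : ℕ) = 3 then -1 else if (j : ℕ) = m + 2 then 1 else 0

set_option maxHeartbeats 4000000 in
private lemma CM4_eq (m : ℕ) (hm : 4 ≤ m) : CM4 m = Rmat m := by
  have e1 : (⟨1, by omega⟩ : Fin (m+3)) ≠ ⟨m+1, by omega⟩ := by
    simp only [ne_eq, Fin.mk.injEq]; omega
  ext i j
  rcases (show (i : ℕ) = m + 1 ∨ (i : ℕ) = m + 2 ∨ (i : ℕ) + 2 < m + 3 by omega)
    with hi | hi | hi
  · have hieq : i = ⟨m+1, by omega⟩ := Fin.ext hi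
    rw [hieq]
    have hne : (⟨m+1, by omega⟩ : Fin (m+3)) ≠ ⟨m+2, by omega⟩ := by
      simp only [ne_eq, Fin.mk.injEq]; omega
    rw [CM4, Matrix.updateRow_ne hne, CM3, Matrix.updateRow_ne hne, CM2,
      Matrix.updateRow_self, CM1, Matrix.updateRow_self, Matrix.updateRow_ne e1]
    simp only [Pi.add_apply, Pi.smul_apply, smul_eq_mul, Cmat, Rmat, Matrix.of_apply]
    split_ifs <;> omega
  · have hieq : i = ⟨m+2, by omega⟩ := Fin.ext hi
    have hC : ∀ x : Fin (m+3), x ≠ ⟨m+1, by omega⟩ → CM2 m x = Cmat (m+3) x := by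
      intro x hx
      rw [CM2, Matrix.updateRow_ne hx, CM1, Matrix.updateRow_ne hx]
    have ne1 : (⟨1, by omega⟩ : Fin (m+3)) ≠ ⟨m+2, by omega⟩ :=
      Fin.ne_of_val_ne (show (1:ℕ) ≠ m+2 by omega)
    have ne1' : (⟨1, by omega⟩ : Fin (m+3)) ≠ ⟨m+1, by omega⟩ :=
      Fin.ne_of_val_ne (show (1:ℕ) ≠ m+1 by omega)
    have ne0' : (⟨0, by omega⟩ : Fin (m+3)) ≠ ⟨m+1, by omega⟩ :=
      Fin.ne_of_val_ne (show (0:ℕ) ≠ m+1 by omega)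
    have nem2 : (⟨m+2, by omega⟩ : Fin (m+3)) ≠ ⟨m+1, by omega⟩ :=
      Fin.ne_of_val_ne (show m+2 ≠ m+1 by omega)
    have h31 : CM3 m ⟨1, by omega⟩ = Cmat (m+3) ⟨1, by omega⟩ := by
      rw [CM3, Matrix.updateRow_ne ne1, hC _ ne1']
    have h3m2 : CM3 m ⟨m+2, by omega⟩
        = Cmat (m+3) ⟨m+2, by omega⟩ + (1:ℤ) • Cmat (m+3) ⟨0, by omega⟩ := by
      rw [CM3, Matrix.updateRow_self, hC _ nem2, hC _ ne0']
    rw [hieq, CM4, Matrix.updateRow_self, h3m2, h31]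
    simp only [Pi.add_apply, Pi.smul_apply, smul_eq_mul, Cmat, Rmat, Matrix.of_apply]
    split_ifs <;> omega
  · have hne2 : i ≠ ⟨m+2, by omega⟩ := Fin.ne_of_val_ne (show (i : ℕ) ≠ m+2 by omega)
    have hne1 : i ≠ ⟨m+1, by omega⟩ := Fin.ne_of_val_ne (show (i : ℕ) ≠ m+1 by omega)
    rw [CM4, Matrix.updateRow_ne hne2, CM3, Matrix.updateRow_ne hne2, CM2,
      Matrix.updateRow_ne hne1, CM1, Matrix.updateRow_ne hne1]
    simp only [Cmat, Rmat, Matrix.of_apply]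
    split_ifs <;> omega

private def Amat : Matrix (Fin 3) (Fin 3) ℤ :=
  Matrix.of fun i j => if (i : ℕ) ≤ (j : ℕ) then 1 else 0

private def Bmat (m : ℕ) : Matrix (Fin 3) (Fin m) ℤ := Matrix.of fun i j =>
  if ((i : ℕ) = 1 ∧ (j : ℕ) = 0) ∨ ((i : ℕ) = 2 ∧ ((j : ℕ) = 0 ∨ (j : ℕ) = 1)) then 1 else 0

private def fEquiv (m : ℕ) : Fin 3 ⊕ Fin m ≃ Fin (m + 3) :=
  finSumFinEquiv.trans (finCongr (by omega : 3 + m = m + 3))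

set_option maxHeartbeats 4000000 in
private lemma blk (m : ℕ) (hm : 4 ≤ m) :
    Matrix.fromBlocks Amat (Bmat m) 0 (Cmat m) = (Rmat m).submatrix (fEquiv m) (fEquiv m) := by
  ext i j
  rcases i with a | a <;> rcases j with b | b <;>
    · have ha := a.isLt
      have hb := b.isLt
      simp only [Matrix.submatrix_apply, fEquiv, Equiv.trans_apply, finSumFinEquiv_apply_left,
        finSumFinEquiv_apply_right, finCongr_apply, Rmat, Cmat,
        Matrix.fromBlocks_apply₁₁, Matrix.fromBlocks_apply₁₂,
        Matrix.fromBlocks_apply₂₁, Matrix.fromBlocks_apply₂₂, Fin.coe_cast,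
        Fin.coe_castAdd, Fin.coe_natAdd, Matrix.of_apply, Amat, Bmat, Matrix.zero_apply]
      split_ifs <;> omega

private lemma detAmat : Amat.det = 1 := by decide

private lemma det_step (m : ℕ) (hm : 4 ≤ m) : (Cmat (m + 3)).det = (Cmat m).det := by
  rw [← detCM4 m hm, ← Matrix.det_submatrix_equiv_self (fEquiv m) (CM4 m), CM4_eq m hm,
    ← blk m hm, Matrix.det_fromBlocks_zero₂₁, detAmat, one_mul]

private lemma base4 : (Cmat 4).det = 0 := by
  have h : Cmat 4 = !![1,1,1,0; 0,1,1,1; 0,1,1,1; -1,0,0,1] := by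
    ext i j; fin_cases i <;> fin_cases j <;> rfl
  rw [h]
  simp [Matrix.det_succ_row_zero, Fin.sum_univ_succ]

private lemma base5 : (Cmat 5).det = 3 := by
  have h : Cmat 5 = !![1,1,1,0,0; 0,1,1,1,0; 0,0,1,1,1; 0,1,0,1,1; -1,0,0,0,1] := by
    ext i j; fin_cases i <;> fin_cases j <;> rfl
  rw [h]
  simp [Matrix.det_succ_row_zero, Fin.sum_univ_succ]
  rfl

set_option maxHeartbeats 1000000 in
private lemma base6 : (Cmat 6).det = 3 := by
  have h : Cmat 6 = !![1,1,1,0,0,0; 0,1,1,1,0,0; 0,0,1,1,1,0; 0,0,0,1,1,1; 0,1,0,0,1,1; -1,0,0,0,0,1] := by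
    ext i j; fin_cases i <;> fin_cases j <;> rfl
  rw [h]
  simp [Matrix.det_succ_row_zero, Fin.sum_univ_succ]
  rfl

/-- `det C_m = 0` if `m mod 3 = 1` and `det C_m = 3` if
`m mod 3 ∈ {0, 2}`, for `m ≥ 4`. -/
theorem det_Cmat (m : ℕ) (hm : 4 ≤ m) :
    (m % 3 = 1 → (Cmat m).det = 0) ∧
    ((m % 3 = 0 ∨ m % 3 = 2) → (Cmat m).det = 3) := by
  induction m using Nat.strong_induction_on with
  | _ m ih =>
    by_cases h7 : m < 7
    · interval_cases m
      · exact ⟨fun _ => base4, fun h => by omega⟩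
      · exact ⟨fun h => by omega, fun _ => base5⟩
      · exact ⟨fun h => by omega, fun _ => base6⟩
    · obtain ⟨k, rfl⟩ : ∃ k, m = k + 3 := ⟨m - 3, by omega⟩
      have hk : 4 ≤ k := by omega
      have IH := ih k (by omega) hk
      rw [det_step k hk]
      have hmod : (k + 3) % 3 = k % 3 := Nat.add_mod_right k 3
      exact ⟨fun h => IH.1 (by omega), fun h => IH.2 (by omega)⟩
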